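/- Suppose (P) is strongly feasible and θ̄ ∈ ℝ satisfies θ_p < θ̄ ≤ θ_p + 1. Then for every θ with θ_p < θ < θ̄, any solution (x,τ,ρ) of ker A(θ) ∩ int K̄ with ‖(x,τ,ρ)‖_∞ ≤ 1 yields a solution (x, τ, τ(θ̄−θ)+ρ) of ker A(θ̄) ∩ int K̄ with ‖(x, τ, τ(θ̄−θ)+ρ)‖_∞ ≤ 1. Consequently, if every feasible solution (x̄,τ̄,ρ̄) of the θ̄-problem satisfies ⟨v,x̄⟩ ≤ ξ_x, τ̄ ≤ ξ_τ, ρ̄ ≤ ξ_ρ for some v ∈ K and constants ξ_x, ξ_τ, ξ_ρ < 1, then the same bounds hold for every feasible (x,τ,ρ) of the θ-problem. -/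

import Mathlib

open scoped RealInnerProductSpace

/-- The optimal value `θ_p` of (P): `inf {⟨c,x⟩ : Ax = b, x ∈ K}` in `EReal`
(so `+∞` if (P) is infeasible). -/
noncomputable def thetaP {E : Type*} [NormedAddCommGroup E] [InnerProductSpace ℝ E]
    {m : ℕ} (K : Set E) (A : E →ₗ[ℝ] EuclideanSpace ℝ (Fin m))
    (b : EuclideanSpace ℝ (Fin m)) (c : E) : EReal :=
  sInf {v : EReal | ∃ x, A x = b ∧ x ∈ K ∧ v = (⟪c, x⟫ : EReal)}

/-- Feasibility for the normalized problem `FP_{S∞}(ker A(θ), int K̄)`: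
`(x,τ,ρ) ∈ ker A(θ) ∩ int K̄` with `‖(x,τ,ρ)‖_∞ ≤ 1`, where `ninf` is the
sup-eigenvalue norm on `E` and the product norm is the max over components. -/
def FeasSInf {E : Type*} [NormedAddCommGroup E] [InnerProductSpace ℝ E]
    {m : ℕ} (K : Set E) (ninf : E → ℝ) (A : E →ₗ[ℝ] EuclideanSpace ℝ (Fin m))
    (b : EuclideanSpace ℝ (Fin m)) (c : E) (θ : ℝ) (x : E) (τ ρ : ℝ) : Prop :=
  A x = τ • b ∧ ⟪c, x⟫ - τ * θ + ρ = 0 ∧ x ∈ interior K ∧ 0 < τ ∧ 0 < ρ ∧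
    max (ninf x) (max |τ| |ρ|) ≤ 1

/-- Suppose (P) is strongly feasible and `θ_p < θ̄ ≤ θ_p + 1`.  Then for
every `θ` with `θ_p < θ < θ̄`, every feasible `(x,τ,ρ)` of the `θ`-problem yields the
feasible point `(x, τ, τ(θ̄−θ)+ρ)` of the `θ̄`-problem; consequently cuts
`⟨v,x̄⟩ ≤ ξ_x`, `τ̄ ≤ ξ_τ`, `ρ̄ ≤ ξ_ρ` valid for the `θ̄`-problem remain valid for the
`θ`-problem. -/
theorem stmt8 {E : Type*} [NormedAddCommGroup E] [InnerProductSpace ℝ E]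
    [FiniteDimensional ℝ E] {m : ℕ} (K : Set E)
    (hKclosed : IsClosed K) (hKconv : Convex ℝ K)
    (hKcone : ∀ z ∈ K, ∀ t : ℝ, 0 ≤ t → t • z ∈ K)
    (hKint : (interior K).Nonempty)
    (hKselfdual : {s : E | ∀ z ∈ K, 0 ≤ ⟪s, z⟫} = K)
    (ninf : E → ℝ)
    (A : E →ₗ[ℝ] EuclideanSpace ℝ (Fin m)) (b : EuclideanSpace ℝ (Fin m)) (c : E)
    (θbar : ℝ)
    (hPsf : ∃ x ∈ interior K, A x = b)
    (hθ1 : thetaP K A b c < (θbar : EReal))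
    (hθ2 : (θbar : EReal) ≤ thetaP K A b c + 1) :
    (∀ θ : ℝ, thetaP K A b c < (θ : EReal) → θ < θbar →
      ∀ (x : E) (τ ρ : ℝ), FeasSInf K ninf A b c θ x τ ρ →
        FeasSInf K ninf A b c θbar x τ (τ * (θbar - θ) + ρ)) ∧
    (∀ v ∈ K, ∀ ξx ξτ ξρ : ℝ, ξx < 1 → ξτ < 1 → ξρ < 1 →
      (∀ (x : E) (τ ρ : ℝ), FeasSInf K ninf A b c θbar x τ ρ →
        ⟪v, x⟫ ≤ ξx ∧ τ ≤ ξτ ∧ ρ ≤ ξρ) →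
      ∀ θ : ℝ, thetaP K A b c < (θ : EReal) → θ < θbar →
        ∀ (x : E) (τ ρ : ℝ), FeasSInf K ninf A b c θ x τ ρ →
          ⟪v, x⟫ ≤ ξx ∧ τ ≤ ξτ ∧ ρ ≤ ξρ) := by

  have main : ∀ θ : ℝ, thetaP K A b c < (θ : EReal) → θ < θbar →
      ∀ (x : E) (τ ρ : ℝ), FeasSInf K ninf A b c θ x τ ρ →
        FeasSInf K ninf A b c θbar x τ (τ * (θbar - θ) + ρ) := by
    intro θ hθp hθb x τ ρ hfeas
    obtain ⟨hA, heq, hx, hτ, hρ, hn⟩ := hfeas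
    have hτ1 : |τ| ≤ 1 := le_trans (le_max_left _ _) (le_trans (le_max_right _ _) hn)
    have hτle : τ ≤ 1 := le_trans (le_abs_self τ) hτ1
    have hxK : x ∈ K := interior_subset hx
    have hmem : (⟪c, τ⁻¹ • x⟫ : EReal) ∈
        {v : EReal | ∃ x, A x = b ∧ x ∈ K ∧ v = (⟪c, x⟫ : EReal)} := by
      refine ⟨τ⁻¹ • x, ?_, hKcone x hxK τ⁻¹ (by positivity), rfl⟩
      rw [map_smul, hA, smul_smul, inv_mul_cancel₀ hτ.ne', one_smul]
    have hle : thetaP K A b c ≤ (⟪c, τ⁻¹ • x⟫ : EReal) := sInf_le hmem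
    have h2 : (θbar : EReal) ≤ ((⟪c, τ⁻¹ • x⟫ + 1 : ℝ) : EReal) := by
      calc (θbar : EReal) ≤ thetaP K A b c + 1 := hθ2
        _ ≤ (⟪c, τ⁻¹ • x⟫ : EReal) + 1 := add_le_add_left hle 1
        _ = ((⟪c, τ⁻¹ • x⟫ + 1 : ℝ) : EReal) := by
            rw [EReal.coe_add, EReal.coe_one]
    have h2' : θbar ≤ ⟪c, τ⁻¹ • x⟫ + 1 := EReal.coe_le_coe_iff.mp h2
    have hinner : ⟪c, τ⁻¹ • x⟫ = τ⁻¹ * ⟪c, x⟫ := real_inner_smul_right c x τ⁻¹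
    rw [hinner] at h2'
    have hcancel : τ * τ⁻¹ = 1 := mul_inv_cancel₀ hτ.ne'
    -- multiply h2' by τ > 0
    have hmul : τ * θbar ≤ ⟪c, x⟫ + τ := by
      calc τ * θbar ≤ τ * (τ⁻¹ * ⟪c, x⟫ + 1) := mul_le_mul_of_nonneg_left h2' hτ.le
        _ = (τ * τ⁻¹) * ⟪c, x⟫ + τ := by ring
        _ = ⟪c, x⟫ + τ := by rw [hcancel]; ring
    have hρ'pos : 0 < τ * (θbar - θ) + ρ := by
      have h1 : 0 < τ * (θbar - θ) := mul_pos hτ (by linarith)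
      linarith
    have hρ'le : τ * (θbar - θ) + ρ ≤ 1 := by nlinarith
    refine ⟨hA, by ring_nf; ring_nf at heq; linarith, hx, hτ, hρ'pos, ?_⟩
    have hninf : ninf x ≤ 1 := le_trans (le_max_left _ _) hn
    rw [abs_of_pos hρ'pos]
    exact max_le hninf (max_le hτ1 hρ'le)
  refine ⟨main, ?_⟩
  intro v hv ξx ξτ ξρ hξx hξτ hξρ hcut θ hθp hθb x τ ρ hfeas
  obtain ⟨h1, h2, h3⟩ := hcut x τ (τ * (θbar - θ) + ρ) (main θ hθp hθb x τ ρ hfeas)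
  obtain ⟨_, _, _, hτ, hρ, _⟩ := hfeas
  have : 0 < τ * (θbar - θ) := mul_pos hτ (by linarith)
  exact ⟨h1, h2, by linarith⟩
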